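/- Let Λ be a level-sentence set and let T be a consistent theory that is not Λ-axiomatizable, i.e., the Λ-consequences of T do not imply all of T. Then there exist complete consistent theories T₀ and T₁ such that T ⊆ T₀, T₁ is inconsistent with T, and Λ ∩ T₀ ⊆ Λ ∩ T₁. -/

import Mathlib

open FirstOrder FirstOrder.Language

/-- `QHier b k φ`: `φ` is a `∃ₖ`-formula (if `b = true`) or a `∀ₖ`-formula (if `b = false`),
i.e. a prenex formula with at most `k` alternating quantifier blocks, beginning with `∃`
(resp. `∀`). -/
inductive QHier {L : FirstOrder.Language} {α : Type} : Bool → ℕ → {n : ℕ} → L.BoundedFormula α n → Prop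
  | qf {b k n} {φ : L.BoundedFormula α n} : φ.IsQF → QHier b k φ
  | ex {k n} {φ : L.BoundedFormula α (n + 1)} : QHier true (k + 1) φ → QHier true (k + 1) φ.ex
  | all {k n} {φ : L.BoundedFormula α (n + 1)} : QHier false (k + 1) φ → QHier false (k + 1) φ.all
  | dual {b k n} {φ : L.BoundedFormula α n} : QHier (!b) k φ → QHier b (k + 1) φ

/-- The set of `∃ₖ`-sentences of `L`. -/
def ExSet (L : FirstOrder.Language) (k : ℕ) : Set L.Sentence := {φ | QHier true k φ}
/-- The set of `∀ₖ`-sentences of `L`. -/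
def AllSet (L : FirstOrder.Language) (k : ℕ) : Set L.Sentence := {φ | QHier false k φ}

/-- A level-sentence set: the set of `∃ₖ`- or of `∀ₖ`-sentences for some `k`. -/
def IsLevelSet {L : FirstOrder.Language} (Λ : Set L.Sentence) : Prop :=
  ∃ k, Λ = ExSet L k ∨ Λ = AllSet L k

/-- `¬Λ`: the set of sentences (logically) equivalent to the negation of a sentence in `Λ`. -/
def NegOf {L : FirstOrder.Language} (Λ : Set L.Sentence) : Set L.Sentence :=
  {ψ | ∃ χ ∈ Λ, (∅ : L.Theory) ⊨ᵇ ψ.iff χ.not}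

/-- `Th_Λ(S)`: the set of `Λ`-sentences provable from (equivalently, entailed by) `S`. -/
def ThL {L : FirstOrder.Language} (Λ : Set L.Sentence) (S : L.Theory) : Set L.Sentence :=
  {ψ ∈ Λ | S ⊨ᵇ ψ}


section Aux
universe u v

variable {L : FirstOrder.Language.{u, v}} {α : Type}

lemma liftAt_all' {n m : ℕ} (φ : L.BoundedFormula α (n + 1)) :
    (φ.all).liftAt 1 m = (φ.liftAt 1 m).all := by
  simp [BoundedFormula.liftAt, BoundedFormula.mapTermRel]

lemma liftAt_ex' {n m : ℕ} (φ : L.BoundedFormula α (n + 1)) :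
    (φ.ex).liftAt 1 m = (φ.liftAt 1 m).ex := by
  simp only [BoundedFormula.ex, BoundedFormula.not, BoundedFormula.liftAt, BoundedFormula.mapTermRel]
  simp [BoundedFormula.liftAt, BoundedFormula.mapTermRel]
  exact ⟨rfl, rfl⟩

lemma QHier.liftAt {b k n m} {φ : L.BoundedFormula α n} (h : QHier b k φ) :
    QHier b k (φ.liftAt 1 m) := by
  induction h with
  | qf h => exact QHier.qf h.liftAt
  | ex h ih => rw [liftAt_ex']; exact QHier.ex ih
  | all h ih => rw [liftAt_all']; exact QHier.all ih
  | dual h ih => exact QHier.dual ih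

/-- Equivalence of `θ` with `φ ⊔ ψ` over all nonempty structures (at universe `max u v`). -/
def OrEquiv {n : ℕ} (θ φ ψ : L.BoundedFormula α n) : Prop :=
  ∀ (M : Type max u v) [L.Structure M] [Nonempty M] (v : α → M) (xs : Fin n → M),
    θ.Realize v xs ↔ (φ.Realize v xs ∨ ψ.Realize v xs)

lemma QHier.isQF_of_zero {b n} {φ : L.BoundedFormula α n} (h : QHier b 0 φ) : φ.IsQF := by
  cases h with
  | qf h => exact h

lemma step1 (k : ℕ)
    (IH : ∀ (b : Bool) {n : ℕ} (φ ψ : L.BoundedFormula α n), QHier b k φ → QHier b k ψ →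
      ∃ θ, QHier b k θ ∧ OrEquiv θ φ ψ) :
    ∀ {b : Bool} {k' n : ℕ} {φ : L.BoundedFormula α n}, QHier b k' φ → k' = k + 1 →
      ∀ ψ : L.BoundedFormula α n, QHier (!b) k ψ →
        ∃ θ, QHier b (k + 1) θ ∧ OrEquiv θ φ ψ := by
  intro b k' n φ h
  induction h with
  | @qf b' k'' n' φ' hqf =>
    intro _ ψ hψ
    obtain ⟨θ, hθ, he⟩ := IH (!b') φ' ψ (QHier.qf hqf) hψ
    exact ⟨θ, hθ.dual, he⟩
  | @ex k'' n' φ' h ih =>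
    intro hk ψ hψ
    obtain ⟨θ, hθ, he⟩ := ih hk (ψ.liftAt 1 n') hψ.liftAt
    refine ⟨θ.ex, hθ.ex, ?_⟩
    intro M _ _ v xs
    have key : ∀ a : M, θ.Realize v (Fin.snoc xs a) ↔
        (φ'.Realize v (Fin.snoc xs a) ∨ ψ.Realize v xs) := by
      intro a
      rw [he M v _]
      simp [BoundedFormula.realize_liftAt_one_self, Fin.snoc_comp_castSucc]
    simp only [BoundedFormula.realize_ex, key, exists_or, exists_const]
  | @all k'' n' φ' h ih =>
    intro hk ψ hψ
    obtain ⟨θ, hθ, he⟩ := ih hk (ψ.liftAt 1 n') hψ.liftAt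
    refine ⟨θ.all, hθ.all, ?_⟩
    intro M _ _ v xs
    have key : ∀ a : M, θ.Realize v (Fin.snoc xs a) ↔
        (φ'.Realize v (Fin.snoc xs a) ∨ ψ.Realize v xs) := by
      intro a
      rw [he M v _]
      simp [BoundedFormula.realize_liftAt_one_self, Fin.snoc_comp_castSucc]
    simp only [BoundedFormula.realize_all, key, forall_or_right]
  | @dual b' k'' n' φ' h _ =>
    intro hk ψ hψ
    have hk' : k'' = k := by omega
    subst hk'
    obtain ⟨θ, hθ, he⟩ := IH (!b') φ' ψ h hψ
    exact ⟨θ, hθ.dual, he⟩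

lemma step2 (k : ℕ)
    (IH : ∀ (b : Bool) {n : ℕ} (φ ψ : L.BoundedFormula α n), QHier b k φ → QHier b k ψ →
      ∃ θ, QHier b k θ ∧ OrEquiv θ φ ψ) :
    ∀ {b : Bool} {k' n : ℕ} {ψ : L.BoundedFormula α n}, QHier b k' ψ → k' = k + 1 →
      ∀ φ : L.BoundedFormula α n, QHier b (k + 1) φ →
        ∃ θ, QHier b (k + 1) θ ∧ OrEquiv θ φ ψ := by
  intro b k' n ψ h
  induction h with
  | @qf b' k'' n' ψ' hqf =>
    intro _ φ hφ
    exact step1 k IH hφ rfl ψ' (QHier.qf hqf)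
  | @ex k'' n' ψ' h ih =>
    intro hk φ hφ
    obtain ⟨θ, hθ, he⟩ := ih hk (φ.liftAt 1 n') hφ.liftAt
    refine ⟨θ.ex, hθ.ex, ?_⟩
    intro M _ _ v xs
    have key : ∀ a : M, θ.Realize v (Fin.snoc xs a) ↔
        (φ.Realize v xs ∨ ψ'.Realize v (Fin.snoc xs a)) := by
      intro a
      rw [he M v _]
      simp [BoundedFormula.realize_liftAt_one_self, Fin.snoc_comp_castSucc]
    simp only [BoundedFormula.realize_ex, key, exists_or, exists_const]
  | @all k'' n' ψ' h ih =>
    intro hk φ hφ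
    obtain ⟨θ, hθ, he⟩ := ih hk (φ.liftAt 1 n') hφ.liftAt
    refine ⟨θ.all, hθ.all, ?_⟩
    intro M _ _ v xs
    have key : ∀ a : M, θ.Realize v (Fin.snoc xs a) ↔
        (φ.Realize v xs ∨ ψ'.Realize v (Fin.snoc xs a)) := by
      intro a
      rw [he M v _]
      simp [BoundedFormula.realize_liftAt_one_self, Fin.snoc_comp_castSucc]
    simp only [BoundedFormula.realize_all, key, forall_or_left]
  | @dual b' k'' n' ψ' h _ =>
    intro hk φ hφ
    have hk' : k'' = k := by omega
    subst hk'
    exact step1 _ IH hφ rfl ψ' h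

lemma qhier_sup : ∀ (k : ℕ) (b : Bool) {n : ℕ} (φ ψ : L.BoundedFormula α n),
    QHier b k φ → QHier b k ψ → ∃ θ, QHier b k θ ∧ OrEquiv θ φ ψ := by
  intro k
  induction k with
  | zero =>
    intro b n φ ψ hφ hψ
    refine ⟨φ ⊔ ψ, QHier.qf (hφ.isQF_of_zero.sup hψ.isQF_of_zero), ?_⟩
    intro M _ _ v xs
    simp [BoundedFormula.realize_sup]
  | succ k ihk =>
    intro b n φ ψ hφ hψ
    exact step2 k ihk hψ rfl φ hφ

lemma list_sup (b : Bool) (k : ℕ) : ∀ l : List L.Sentence, (∀ χ ∈ l, QHier b k χ) →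
    ∃ χ' : L.Sentence, QHier b k χ' ∧
      ∀ (M : Type max u v) [L.Structure M] [Nonempty M], (M ⊨ χ' ↔ ∃ χ ∈ l, M ⊨ χ) := by
  intro l
  induction l with
  | nil =>
    intro _
    refine ⟨⊥, QHier.qf BoundedFormula.isQF_bot, ?_⟩
    intro M _ _
    simp [Sentence.Realize]
  | cons χ l ih =>
    intro hl
    obtain ⟨χ'', hχ''Q, hχ''⟩ := ih fun x hx => hl x (List.mem_cons_of_mem _ hx)
    obtain ⟨θ, hθQ, hθ⟩ := qhier_sup k b χ χ'' (hl χ List.mem_cons_self) hχ''Q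
    refine ⟨θ, hθQ, ?_⟩
    intro M _ _
    have := hθ M default default
    simp only [Sentence.Realize, Formula.Realize] at *
    rw [this, hχ'' M]
    simp [List.mem_cons, or_and_right, exists_or]

end Aux

/-- If a consistent theory `T` is not `Λ`-axiomatizable, then there are complete consistent
theories `T₀ ⊇ T` and `T₁` inconsistent with `T` such that `Λ ∩ T₀ ⊆ Λ ∩ T₁`. -/
theorem statement4 {L : FirstOrder.Language} (Λ : Set L.Sentence) (T : L.Theory)
    (hΛ : IsLevelSet Λ) (hTcon : T.IsSatisfiable)
    (hax : ¬ ∀ φ ∈ T, ThL Λ T ⊨ᵇ φ) :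
    ∃ T₀ T₁ : L.Theory, T₀.IsMaximal ∧ T₁.IsMaximal ∧
      T ⊆ T₀ ∧ ¬ (T₁ ∪ T).IsSatisfiable ∧ Λ ∩ T₀ ⊆ Λ ∩ T₁ := by
  obtain ⟨k, hk⟩ := hΛ
  have hΛ' : ∃ b : Bool, Λ = {φ : L.Sentence | QHier b k φ} := by
    rcases hk with h | h
    · exact ⟨true, h⟩
    · exact ⟨false, h⟩
  obtain ⟨b, rfl⟩ := hΛ'
  set Λ : Set L.Sentence := {φ : L.Sentence | QHier b k φ} with hΛdef
  push_neg at hax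
  obtain ⟨φ₀, hφ₀T, hφ₀⟩ := hax
  rw [Theory.models_iff_not_satisfiable, not_not] at hφ₀
  obtain ⟨M₁⟩ := hφ₀
  have hM₁not : (M₁ : Type _) ⊨ φ₀.not :=
    Theory.realize_sentence_of_mem (ThL Λ T ∪ {φ₀.not})
      (Set.mem_union_right _ (Set.mem_singleton _))
  have hM₁Th : ∀ χ ∈ ThL Λ T, (M₁ : Type _) ⊨ χ := fun χ h =>
    Theory.realize_sentence_of_mem (ThL Λ T ∪ {φ₀.not}) (Set.mem_union_left _ h)
  -- the auxiliary theory
  set S : L.Theory := T ∪ ((Formula.not : L.Sentence → L.Sentence) '' {χ | χ ∈ Λ ∧ χ ∉ L.completeTheory M₁}) with hSdef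
  have hnotinj : Function.Injective (Formula.not : L.Sentence → L.Sentence) := by
    intro a c h
    have h' : BoundedFormula.imp a ⊥ = BoundedFormula.imp c ⊥ := h
    injection h'
  have hS : S.IsSatisfiable := by
    rw [Theory.isSatisfiable_iff_isFinitelySatisfiable]
    intro T0 hT0
    set F : Set L.Sentence :=
      {χ | χ ∈ Λ ∧ χ ∉ L.completeTheory M₁ ∧ χ.not ∈ (T0 : Set L.Sentence)} with hFdef
    have hFfin : F.Finite := by
      refine Set.Finite.subset (Set.Finite.preimage hnotinj.injOn T0.finite_toSet) ?_
      exact fun χ h => h.2.2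
    set l : List L.Sentence := hFfin.toFinset.toList with hldef
    have hmeml : ∀ χ : L.Sentence, χ ∈ l ↔ χ ∈ F := by
      intro χ
      rw [hldef, Finset.mem_toList, Set.Finite.mem_toFinset]
    obtain ⟨χ', hχ'Q, hχ'⟩ := list_sup b k l (fun χ h => ((hmeml χ).1 h).1)
    by_cases hcase : ∃ M : T.ModelType, ¬ (M : Type _) ⊨ χ'
    · obtain ⟨M, hM⟩ := hcase
      have hmodel : (M : Type _) ⊨ (T0 : L.Theory) := by
        refine ⟨fun ψ hψ => ?_⟩
        rcases hT0 hψ with hT | ⟨χ, ⟨hχΛ, hχ₁⟩, rfl⟩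
        · exact Theory.realize_sentence_of_mem T hT
        · rw [Sentence.realize_not _]
          intro hc
          apply hM
          rw [hχ' M]
          exact ⟨χ, (hmeml χ).2 ⟨hχΛ, hχ₁, hψ⟩, hc⟩
      exact Theory.Model.isSatisfiable M
    · push_neg at hcase
      have hTχ : T ⊨ᵇ χ' := Theory.models_sentence_iff.2 hcase
      have hmem : χ' ∈ ThL Λ T := ⟨hχ'Q, hTχ⟩
      have h1 : (M₁ : Type _) ⊨ χ' := hM₁Th _ hmem
      rw [hχ' M₁] at h1
      obtain ⟨χ, hl, hχ⟩ := h1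
      exact absurd (mem_completeTheory.2 hχ) ((hmeml χ).1 hl).2.1
  obtain ⟨M₀⟩ := hS
  refine ⟨L.completeTheory M₀, L.completeTheory M₁, completeTheory.isMaximal L M₀,
    completeTheory.isMaximal L M₁, ?_, ?_, ?_⟩
  · intro φ hφ
    exact mem_completeTheory.2 (Theory.realize_sentence_of_mem S (Set.mem_union_left _ hφ))
  · rintro ⟨N⟩
    have h1 : (N : Type _) ⊨ φ₀ :=
      Theory.realize_sentence_of_mem (L.completeTheory M₁ ∪ T) (Set.mem_union_right _ hφ₀T)
    have h2 : (N : Type _) ⊨ φ₀.not :=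
      Theory.realize_sentence_of_mem (L.completeTheory M₁ ∪ T)
        (Set.mem_union_left _ (mem_completeTheory.2 hM₁not))
    exact ((Sentence.realize_not _).1 h2) h1
  · rintro χ ⟨hχΛ, hχ₀⟩
    refine ⟨hχΛ, ?_⟩
    by_contra hχ₁
    have hmemS : χ.not ∈ S := Set.mem_union_right _ ⟨χ, ⟨hχΛ, hχ₁⟩, rfl⟩
    have h2 : (M₀ : Type _) ⊨ χ.not := Theory.realize_sentence_of_mem S hmemS
    have h1 : (M₀ : Type _) ⊨ χ := mem_completeTheory.1 hχ₀
    exact (Sentence.realize_not _).1 h2 h1
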